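/- Let n ≥ 2 and 0 < r < R, and let E ∈ S_{r,R}. There exist constants ε₀ = ε₀(n,r,R) > 0 and η₂, η₃ > 0 depending only on n, r, R such that for all ε ∈ (0,ε₀] and all x ∈ ∂E one has η₃ ε^{n−1} ≤ H^{n−1}(∂E ∩ B_ε(x)) ≤ η₂ ε^{n−1}, where H^{n−1} denotes (n−1)-dimensional Hausdorff measure. -/

import Mathlib

open MeasureTheory Metric Set
open scoped ENNReal
open scoped NNReal RealInnerProductSpace

noncomputable section

section AuxGeom

variable {V : Type*} [NormedAddCommGroup V] [InnerProductSpace ℝ V]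


lemma starL1 {E : Set V} {r : ℝ} (hball : ball 0 r ⊆ E)
    (hstar : ∀ y ∈ ball (0:V) r, ∀ x ∈ E, segment ℝ y x ⊆ E)
    {y x : V} (hy : y ∈ ball 0 r) (hx : x ∈ closure E) {t : ℝ} (ht0 : 0 ≤ t) (ht1 : t < 1) :
    (1-t) • y + t • x ∈ E := by
  rcases eq_or_lt_of_le ht0 with h0 | h0
  · simp only [← h0, sub_zero, one_smul, zero_smul, add_zero]
    exact hball hy
  have h1t : 0 < 1 - t := by linarith
  have hry : ‖y‖ < r := mem_ball_zero_iff.1 hy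
  have hρ : 0 < (1-t) * (r - ‖y‖) / t := div_pos (mul_pos h1t (by linarith)) h0
  obtain ⟨x', hx'E, hxx'⟩ := Metric.mem_closure_iff.1 hx _ hρ
  rw [dist_eq_norm] at hxx'
  set y' := y + (t/(1-t)) • (x - x') with hy'
  have hy'r : y' ∈ ball (0:V) r := by
    rw [mem_ball_zero_iff]
    calc ‖y'‖ ≤ ‖y‖ + ‖(t/(1-t)) • (x - x')‖ := norm_add_le _ _
    _ = ‖y‖ + (t/(1-t)) * ‖x - x'‖ := by
        rw [norm_smul, Real.norm_eq_abs, abs_of_pos (by positivity)]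
    _ < ‖y‖ + (t/(1-t)) * ((1-t) * (r - ‖y‖) / t) := by
        gcongr
    _ = r := by field_simp; ring
  have key : (1-t) • y' + t • x' = (1-t) • y + t • x := by
    rw [hy']; match_scalars <;> field_simp <;> ring
  have : (1-t) • y' + t • x' ∈ segment ℝ y' x' :=
    ⟨1-t, t, by linarith, ht0, by ring, rfl⟩
  rw [key] at this
  exact hstar y' hy'r x' hx'E this


lemma coneL2 {E : Set V} {r R : ℝ} (hr : 0 < r) (hrR : r < R) (hE : IsOpen E)
    (hball : ball 0 r ⊆ E) (hER : E ⊆ ball 0 R)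
    (hstar : ∀ y ∈ ball (0:V) r, ∀ x ∈ E, segment ℝ y x ⊆ E)
    {z₁ z₂ : V} (h₁ : z₁ ∈ frontier E) (h₂ : z₂ ∈ frontier E) (hnear : ‖z₂ - z₁‖ < r) :
    |⟪z₂ - z₁, z₁⟫| ≤ (1 - r^2/(4*R^2)) * (‖z₂ - z₁‖ * ‖z₁‖) := by
  have hR : 0 < R := hr.trans hrR
  have hfrE : ∀ z ∈ frontier E, z ∉ E := fun z hz hzE =>
    (Set.eq_empty_iff_forall_notMem.1 hE.inter_frontier_eq z) ⟨hzE, hz⟩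
  have hnorm : ∀ z ∈ frontier E, r ≤ ‖z‖ ∧ ‖z‖ ≤ R := by
    intro z hz
    constructor
    · by_contra h
      exact hfrE z hz (hball (mem_ball_zero_iff.2 (not_le.1 h)))
    · have h1 : z ∈ closure (ball (0:V) R) := closure_mono hER (frontier_subset_closure hz)
      rw [closure_ball 0 hR.ne'] at h1
      exact mem_closedBall_zero_iff.1 h1
  obtain ⟨hr₁, hR₁⟩ := hnorm z₁ h₁
  have hz₁pos : 0 < ‖z₁‖ := hr.trans_le hr₁
  set c : ℝ := r^2/(4*R^2) with hc
  have hcpos : 0 < c := by positivity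
  have hc1 : c < 1/2 := by
    rw [hc, div_lt_div_iff₀ (by positivity) (by norm_num)]
    nlinarith
  set w := z₂ - z₁ with hw
  set t := ‖w‖ with ht
  rcases eq_or_lt_of_le (norm_nonneg w) with h0 | h0
  · have hw0 : w = 0 := norm_eq_zero.1 h0.symm
    have ht0 : t = 0 := ht.trans (congrArg norm hw0) |>.trans norm_zero
    simp only [hw0, inner_zero_left, abs_zero, ht0, zero_mul, mul_zero, le_refl]
  set lam := ‖z₁‖ with hlam
  set κ := lam/t with hκ
  have hκpos : 0 < κ := div_pos hz₁pos h0
  have hκt : κ * t = lam := div_mul_cancel₀ _ h0.ne'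
  have hlamR : lam ≤ R := hR₁
  have hsq : lam^2 ≤ R^2 := by nlinarith
  by_contra hcon
  rw [not_le, lt_abs] at hcon
  have hupper : ∀ u : ℝ, u < 2*c*lam^2 → u < r^2 := by
    intro u hu
    calc u < 2*c*lam^2 := hu
    _ ≤ 2*c*R^2 := by nlinarith [mul_le_mul_of_nonneg_left hsq hcpos.le]
    _ = r^2/2 := by rw [hc]; field_simp; ring
    _ < r^2 := by nlinarith
  rcases hcon with hpos | hneg
  · -- z₁ lies strictly inside segment from y to z₂
    set y := z₁ - κ • w with hy
    have hysq : ‖y‖^2 = lam^2 - 2*κ*⟪z₁, w⟫ + κ^2 * t^2 := by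
      rw [hy, norm_sub_sq_real, real_inner_smul_right, norm_smul, Real.norm_eq_abs,
        abs_of_pos hκpos, mul_pow, ← ht, ← hlam]
      ring
    have hyr : y ∈ ball (0:V) r := by
      rw [mem_ball_zero_iff]
      have hinn : ⟪z₁, w⟫ = ⟪w, z₁⟫ := real_inner_comm _ _
      have hmul : κ * ((1-c)*(t*lam)) < κ * ⟪w, z₁⟫ := by
        exact mul_lt_mul_of_pos_left hpos hκpos
      have hq1 : κ * ((1-c)*(t*lam)) = (1-c)*lam^2 := by rw [← hκt]; ring
      have hq2 : κ^2*t^2 = lam^2 := by rw [← hκt]; ring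
      have h2 : ‖y‖^2 < 2*c*lam^2 := by
        rw [hysq, hinn]
        linarith [hmul]
      exact lt_of_pow_lt_pow_left₀ 2 hr.le (hupper _ h2)
    set σ := lam/(t+lam) with hσ
    have hσ0 : 0 ≤ σ := by positivity
    have hσ1 : σ < 1 := by
      rw [hσ, div_lt_one (by positivity)]; linarith
    have hkey : (1-σ) • y + σ • z₂ = z₁ := by
      have hz₂ : z₂ = z₁ + w := by rw [hw]; abel
      have hcoef : σ - (1-σ)*κ = 0 := by
        have ht0 : t ≠ 0 := h0.ne'
        have htl : t + lam ≠ 0 := by positivity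
        rw [hσ, hκ]; field_simp; ring
      rw [hy, hz₂]
      have hmod : (1-σ)•(z₁ - κ•w) + σ•(z₁+w) = z₁ + (σ - (1-σ)*κ)•w := by module
      rw [hmod, hcoef, zero_smul, add_zero]
    exact hfrE z₁ h₁ (hkey ▸ starL1 hball hstar hyr (frontier_subset_closure h₂) hσ0 hσ1)
  · have hneg' : ⟪w, z₁⟫ < -((1-c)*(t*lam)) := by linarith
    set y := z₁ + κ • w with hy
    have hysq : ‖y‖^2 = lam^2 + 2*κ*⟪z₁, w⟫ + κ^2 * t^2 := by
      rw [hy, norm_add_sq_real, real_inner_smul_right, norm_smul, Real.norm_eq_abs,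
        abs_of_pos hκpos, mul_pow, ← ht, ← hlam]
      ring
    have hyr : y ∈ ball (0:V) r := by
      rw [mem_ball_zero_iff]
      have hinn : ⟪z₁, w⟫ = ⟪w, z₁⟫ := real_inner_comm _ _
      have hmul : κ * ⟪w, z₁⟫ < κ * (-((1-c)*(t*lam))) := by
        exact mul_lt_mul_of_pos_left hneg' hκpos
      have hq1 : κ * (-((1-c)*(t*lam))) = -((1-c)*lam^2) := by rw [← hκt]; ring
      have hq2 : κ^2*t^2 = lam^2 := by rw [← hκt]; ring
      have h2 : ‖y‖^2 < 2*c*lam^2 := by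
        rw [hysq, hinn]
        linarith [hmul]
      exact lt_of_pow_lt_pow_left₀ 2 hr.le (hupper _ h2)
    set μ := 1 - t/lam with hμ
    have hμ0 : 0 ≤ μ := by
      rw [hμ, sub_nonneg, div_le_one hz₁pos]; linarith
    have hμ1 : μ < 1 := by
      rw [hμ]; have : 0 < t/lam := by positivity
      linarith
    have hkey : (1-μ) • y + μ • z₁ = z₂ := by
      have hcoef : (1-μ)*κ = 1 := by
        have ht0 : t ≠ 0 := h0.ne'
        have hl0 : lam ≠ 0 := hz₁pos.ne'
        rw [hμ, hκ]; field_simp; ring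
      have hmod : (1-μ)•(z₁ + κ•w) + μ•z₁ = z₁ + ((1-μ)*κ)•w := by module
      rw [hy, hmod, hcoef, one_smul, hw]; abel
    exact hfrE z₂ h₂ (hkey ▸ starL1 hball hstar hyr (frontier_subset_closure h₁) hμ0 hμ1)

lemma normalize_diff {a b : V} (ha : a ≠ 0) (hb : b ≠ 0) :
    ‖‖a‖⁻¹ • a - ‖b‖⁻¹ • b‖ ≤ 2 * ‖a - b‖ / ‖a‖ := by
  have ha' : 0 < ‖a‖ := norm_pos_iff.2 ha
  have hb' : 0 < ‖b‖ := norm_pos_iff.2 hb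
  have hsplit : ‖a‖⁻¹ • a - ‖b‖⁻¹ • b = ‖a‖⁻¹ • (a - b) + (‖a‖⁻¹ - ‖b‖⁻¹) • b := by
    match_scalars <;> field_simp <;> ring
  rw [hsplit]
  calc ‖‖a‖⁻¹ • (a - b) + (‖a‖⁻¹ - ‖b‖⁻¹) • b‖
      ≤ ‖‖a‖⁻¹ • (a - b)‖ + ‖(‖a‖⁻¹ - ‖b‖⁻¹) • b‖ := norm_add_le _ _
    _ = ‖a‖⁻¹ * ‖a - b‖ + |‖a‖⁻¹ - ‖b‖⁻¹| * ‖b‖ := by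
        rw [norm_smul, norm_smul, Real.norm_eq_abs, Real.norm_eq_abs,
          abs_of_pos (by positivity)]
    _ ≤ ‖a‖⁻¹ * ‖a - b‖ + (|‖b‖ - ‖a‖| / (‖a‖ * ‖b‖)) * ‖b‖ := by
        gcongr
        have h3 : ‖a‖⁻¹ - ‖b‖⁻¹ = (‖b‖ - ‖a‖) / (‖a‖ * ‖b‖) := by field_simp
        rw [h3, abs_div, abs_of_pos (mul_pos ha' hb')]
    _ = ‖a‖⁻¹ * ‖a - b‖ + |‖b‖ - ‖a‖| / ‖a‖ := by field_simp
    _ ≤ ‖a‖⁻¹ * ‖a - b‖ + ‖a - b‖ / ‖a‖ := by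
        gcongr
        rw [abs_sub_comm]
        exact abs_norm_sub_norm_le a b
    _ = 2 * ‖a - b‖ / ‖a‖ := by field_simp; ring

lemma coneL3 {E : Set V} {r R : ℝ} (hr : 0 < r) (hrR : r < R) (hE : IsOpen E)
    (hball : ball 0 r ⊆ E) (hER : E ⊆ ball 0 R)
    (hstar : ∀ y ∈ ball (0:V) r, ∀ x ∈ E, segment ℝ y x ⊆ E)
    {x z₁ z₂ : V} (hx : x ∈ frontier E) (h₁ : z₁ ∈ frontier E) (h₂ : z₂ ∈ frontier E)
    {ε : ℝ} (hz₁ : z₁ ∈ ball x ε) (hz₂ : z₂ ∈ ball x ε)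
    (hε : ε ≤ min (r/2) (r^2/(4*R^2) * r/4)) :
    |⟪z₂ - z₁, ‖x‖⁻¹ • x⟫| ≤ (1 - r^2/(8*R^2)) * ‖z₂ - z₁‖ := by
  have hR : 0 < R := hr.trans hrR
  set c : ℝ := r^2/(4*R^2) with hc
  have hcpos : 0 < c := by positivity
  have hfrE : ∀ z ∈ frontier E, z ∉ E := fun z hz hzE =>
    (Set.eq_empty_iff_forall_notMem.1 hE.inter_frontier_eq z) ⟨hzE, hz⟩
  have hrnorm : ∀ z ∈ frontier E, r ≤ ‖z‖ := by
    intro z hz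
    by_contra h
    exact hfrE z hz (hball (mem_ball_zero_iff.2 (not_le.1 h)))
  have hrx : r ≤ ‖x‖ := hrnorm x hx
  have hrz₁ : r ≤ ‖z₁‖ := hrnorm z₁ h₁
  have hxne : x ≠ 0 := fun h => by simp [h] at hrx; linarith
  have hz₁ne : z₁ ≠ 0 := fun h => by simp [h] at hrz₁; linarith
  have hεr2 : ε ≤ r/2 := hε.trans (min_le_left _ _)
  have hεc : ε ≤ c*r/4 := hε.trans (min_le_right _ _)
  have hnear : ‖z₂ - z₁‖ < r := by
    have h1 : dist z₂ z₁ ≤ dist z₂ x + dist x z₁ := dist_triangle _ _ _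
    rw [dist_eq_norm] at h1
    have := mem_ball.1 hz₁
    have := mem_ball.1 hz₂
    rw [dist_comm x z₁] at h1
    calc ‖z₂ - z₁‖ ≤ dist z₂ x + dist z₁ x := h1
    _ < ε + ε := by gcongr <;> assumption
    _ ≤ r := by linarith
  have hL2 := coneL2 hr hrR hE hball hER hstar h₁ h₂ hnear
  have hεpos : 0 < ε := pos_of_mem_ball hz₁
  set w := z₂ - z₁ with hw
  have hz₁pos : 0 < ‖z₁‖ := norm_pos_iff.2 hz₁ne
  have he₁ : |⟪w, ‖z₁‖⁻¹ • z₁⟫| ≤ (1 - c) * ‖w‖ := by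
    rw [real_inner_smul_right, abs_mul, abs_of_pos (inv_pos.2 hz₁pos)]
    rw [inv_mul_le_iff₀ hz₁pos]
    calc |⟪w, z₁⟫| ≤ (1 - c) * (‖w‖ * ‖z₁‖) := hL2
    _ = ‖z₁‖ * ((1 - c) * ‖w‖) := by ring
  have hdiff : ‖‖z₁‖⁻¹ • z₁ - ‖x‖⁻¹ • x‖ ≤ c/2 := by
    have h1 : ‖z₁ - x‖ ≤ ε := le_of_lt (by rw [← dist_eq_norm]; exact mem_ball.1 hz₁)
    calc ‖‖z₁‖⁻¹ • z₁ - ‖x‖⁻¹ • x‖ ≤ 2 * ‖z₁ - x‖ / ‖z₁‖ := normalize_diff hz₁ne hxne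
    _ ≤ 2 * ε / r := div_le_div₀ (by positivity) (by linarith) hr hrz₁
    _ ≤ c/2 := by rw [div_le_div_iff₀ (by linarith) (by norm_num)]; linarith
  have hc8 : c/2 = r^2/(8*R^2) := by rw [hc]; ring
  calc |⟪w, ‖x‖⁻¹ • x⟫| ≤ |⟪w, ‖z₁‖⁻¹ • z₁⟫| + |⟪w, ‖x‖⁻¹ • x - ‖z₁‖⁻¹ • z₁⟫| := by
        have h4 : ⟪w, ‖x‖⁻¹ • x⟫ = ⟪w, ‖z₁‖⁻¹ • z₁⟫ + ⟪w, ‖x‖⁻¹ • x - ‖z₁‖⁻¹ • z₁⟫ := by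
          rw [← inner_add_right]; congr 1; abel
        rw [h4]; exact abs_add_le _ _
    _ ≤ (1 - c) * ‖w‖ + ‖w‖ * ‖‖x‖⁻¹ • x - ‖z₁‖⁻¹ • z₁‖ :=
        add_le_add he₁ (abs_real_inner_le_norm _ _)
    _ ≤ (1 - c) * ‖w‖ + ‖w‖ * (c/2) := by
        have h5 : ‖‖x‖⁻¹ • x - ‖z₁‖⁻¹ • z₁‖ ≤ c/2 := by rw [norm_sub_rev]; exact hdiff
        exact add_le_add_right (mul_le_mul_of_nonneg_left h5 (norm_nonneg w)) _
    _ = (1 - c/2) * ‖w‖ := by ring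
    _ = (1 - r^2/(8*R^2)) * ‖w‖ := by rw [hc8]

lemma coneL4 {E : Set V} {r R : ℝ} (hr : 0 < r) (hrR : r < R) (hE : IsOpen E)
    (hball : ball 0 r ⊆ E)
    (hstar : ∀ y ∈ ball (0:V) r, ∀ x ∈ E, segment ℝ y x ⊆ E)
    {x : V} (hx : x ∈ frontier E) (hxpos : 0 < ‖x‖) {v : V}
    {s : ℝ} (hs0 : 0 < s) (hsx : s ≤ ‖x‖) (hvs : ‖v‖ * ‖x‖ < r * s) :
    (x + v - (s/‖x‖) • x ∈ E) ∧ (x + v + (s/‖x‖) • x ∉ closure E) := by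
  have hfrE : ∀ z ∈ frontier E, z ∉ E := fun z hz hzE =>
    (Set.eq_empty_iff_forall_notMem.1 hE.inter_frontier_eq z) ⟨hzE, hz⟩
  have hxcl : x ∈ closure E := frontier_subset_closure hx
  have hxne : ‖x‖ ≠ 0 := hxpos.ne'
  constructor
  · -- q₋ ∈ E
    set y := (‖x‖/s) • v with hy
    have hyr : y ∈ ball (0:V) r := by
      rw [mem_ball_zero_iff, hy, norm_smul, Real.norm_eq_abs, abs_of_pos (by positivity)]
      rw [div_mul_eq_mul_div, div_lt_iff₀ hs0, mul_comm ‖x‖ ‖v‖, mul_comm r s]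
      linarith
    have ht0 : (0:ℝ) ≤ 1 - s/‖x‖ := by
      rw [sub_nonneg, div_le_one hxpos]; exact hsx
    have ht1 : 1 - s/‖x‖ < 1 := by
      have : 0 < s/‖x‖ := by positivity
      linarith
    have := starL1 hball hstar hyr hxcl ht0 ht1
    have hkey : (1 - (1 - s/‖x‖)) • y + (1 - s/‖x‖) • x = x + v - (s/‖x‖) • x := by
      rw [hy]
      match_scalars <;> field_simp <;> ring
    rwa [hkey] at this
  · -- q₊ ∉ closure E
    intro hq
    set y := -((‖x‖/s) • v) with hy
    have hyr : y ∈ ball (0:V) r := by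
      rw [mem_ball_zero_iff, hy, norm_neg, norm_smul, Real.norm_eq_abs,
        abs_of_pos (by positivity)]
      rw [div_mul_eq_mul_div, div_lt_iff₀ hs0, mul_comm ‖x‖ ‖v‖, mul_comm r s]
      linarith
    have ht0 : (0:ℝ) ≤ ‖x‖/(s+‖x‖) := by positivity
    have ht1 : ‖x‖/(s+‖x‖) < 1 := by
      rw [div_lt_one (by positivity)]; linarith
    have := starL1 hball hstar hyr hq ht0 ht1
    have hkey : (1 - ‖x‖/(s+‖x‖)) • y + (‖x‖/(s+‖x‖)) • (x + v + (s/‖x‖) • x) = x := by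
      rw [hy]
      have hsx0 : s + ‖x‖ ≠ 0 := by positivity
      match_scalars <;> field_simp <;> ring
    rw [hkey] at this
    exact hfrE x hx this

lemma cross_frontier {α : Type*} [TopologicalSpace α] {s E : Set α} (hs : IsPreconnected s)
    (hE : IsOpen E) {a b : α} (ha : a ∈ s) (haE : a ∈ E) (hb : b ∈ s)
    (hbE : b ∉ closure E) : (s ∩ frontier E).Nonempty := by
  by_contra h
  rw [Set.not_nonempty_iff_eq_empty] at h
  have := hs E (closure E)ᶜ hE (isClosed_closure.isOpen_compl) ?_ ⟨a, ha, haE⟩ ⟨b, hb, hbE⟩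
  · obtain ⟨z, -, hz₁, hz₂⟩ := this
    exact hz₂ (subset_closure hz₁)
  · intro z hz
    by_cases hzc : z ∈ closure E
    · have : z ∉ frontier E := fun hf => (Set.eq_empty_iff_forall_notMem.1 h z) ⟨hz, hf⟩
      rw [frontier, hE.interior_eq] at this
      simp only [Set.mem_diff, not_and, not_not] at this
      exact Or.inl (this hzc)
    · exact Or.inr hzc

/-- Lower bound surjectivity: every point `v` of the small disk in the hyperplane `x ⟂`
is the projection of some frontier point in `ball x ε`. -/
lemma coneL5 {E : Set V} {r R : ℝ} (hr : 0 < r) (hrR : r < R) (hE : IsOpen E)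
    (hball : ball 0 r ⊆ E) (hER : E ⊆ ball 0 R)
    (hstar : ∀ y ∈ ball (0:V) r, ∀ x ∈ E, segment ℝ y x ⊆ E)
    {x : V} (hx : x ∈ frontier E) {ε : ℝ} (hε0 : 0 < ε) (hεr : ε ≤ r)
    {v : V} (hv : ⟪v, x⟫ = 0) (hvn : ‖v‖ < r/(4*R) * ε) :
    ∃ z ∈ frontier E ∩ ball x ε, z - ⟪z, ‖x‖⁻¹ • x⟫ • (‖x‖⁻¹ • x) = v := by
  have hR : 0 < R := hr.trans hrR
  have hfrE : ∀ z ∈ frontier E, z ∉ E := fun z hz hzE =>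
    (Set.eq_empty_iff_forall_notMem.1 hE.inter_frontier_eq z) ⟨hzE, hz⟩
  have hrx : r ≤ ‖x‖ := by
    by_contra h
    exact hfrE x hx (hball (mem_ball_zero_iff.2 (not_le.1 h)))
  have hxR : ‖x‖ ≤ R := by
    have h1 : x ∈ closure (ball (0:V) R) := closure_mono hER (frontier_subset_closure hx)
    rw [closure_ball 0 hR.ne'] at h1
    exact mem_closedBall_zero_iff.1 h1
  have hxpos : 0 < ‖x‖ := lt_of_lt_of_le hr hrx
  set s : ℝ := ε/2 with hs
  have hs0 : 0 < s := by positivity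
  have hsx : s ≤ ‖x‖ := by
    rw [hs]; linarith
  have hvs : ‖v‖ * ‖x‖ < r * s := by
    calc ‖v‖ * ‖x‖ ≤ ‖v‖ * R := by gcongr
    _ < (r/(4*R) * ε) * R := by gcongr
    _ = r * ε/4 := by field_simp
    _ < r * s := by rw [hs]; nlinarith
  obtain ⟨hqm, hqp⟩ := coneL4 hr hrR hE hball hstar hx hxpos hs0 hsx hvs
  -- the segment from q₋ to q₊ crosses the frontier
  obtain ⟨z, hzseg, hzfr⟩ := cross_frontier (Convex.isPreconnected (convex_segment _ _)) hE
    (left_mem_segment ℝ _ _) hqm (right_mem_segment ℝ _ _) hqp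
  obtain ⟨a, b_, ha, hb_, hab, hzeq⟩ := hzseg
  -- z = x + v + κ • x with κ = (b_ - a) * (s/‖x‖)
  set κ : ℝ := (b_ - a) * (s/‖x‖) with hκ
  have hzx : z = x + v + κ • x := by
    rw [← hzeq, hκ]
    have : a = 1 - b_ := by linarith
    rw [this]
    match_scalars <;> field_simp <;> ring
  have hκbound : |κ| * ‖x‖ ≤ s := by
    rw [hκ, abs_mul, abs_of_pos (by positivity : (0:ℝ) < s/‖x‖)]
    have hb1 : |b_ - a| ≤ 1 := by
      rw [abs_le]; constructor <;> linarith
    calc |b_ - a| * (s/‖x‖) * ‖x‖ = |b_ - a| * s := by field_simp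
    _ ≤ 1 * s := by gcongr
    _ = s := one_mul s
  have hzball : z ∈ ball x ε := by
    rw [mem_ball, dist_eq_norm, hzx]
    have heq : x + v + κ • x - x = v + κ • x := by abel
    rw [heq]
    have hnormsq : ‖v + κ • x‖^2 = ‖v‖^2 + (|κ| * ‖x‖)^2 := by
      rw [norm_add_sq_real, real_inner_smul_right, hv, norm_smul, Real.norm_eq_abs]
      ring
    have h1 : ‖v + κ • x‖^2 < ε^2 := by
      rw [hnormsq]
      have h2 : ‖v‖ < ε/2 := by
        calc ‖v‖ < r/(4*R) * ε := hvn
        _ ≤ ε/2 := by rw [div_mul_eq_mul_div, div_le_div_iff₀ (by positivity) (by norm_num)]; nlinarith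
      have h3 : |κ| * ‖x‖ ≤ ε/2 := by rw [hs] at hκbound; linarith
      nlinarith [abs_nonneg κ, norm_nonneg v, norm_nonneg (v + κ • x), mul_nonneg (abs_nonneg κ) (norm_nonneg x)]
    nlinarith [norm_nonneg (v + κ • x)]
  refine ⟨z, ⟨hzfr, hzball⟩, ?_⟩
  -- projection of z is v
  have hex : ⟪x, ‖x‖⁻¹ • x⟫ = ‖x‖ := by
    rw [real_inner_smul_right, real_inner_self_eq_norm_sq, sq]
    field_simp [hxpos.ne']
  have hvx : ⟪v, ‖x‖⁻¹ • x⟫ = 0 := by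
    rw [real_inner_smul_right, hv, mul_zero]
  have hinner : ⟪z, ‖x‖⁻¹ • x⟫ = (1 + κ) * ‖x‖ := by
    rw [hzx, inner_add_left, inner_add_left, real_inner_smul_left, hex, hvx]
    ring
  have hx2 : ⟪z, ‖x‖⁻¹ • x⟫ • (‖x‖⁻¹ • x) = (1+κ) • x := by
    rw [hinner]
    match_scalars
    field_simp
  rw [hx2, hzx]
  module



lemma proj_sub (e : V) (z w : V) :
    (z - ⟪z,e⟫•e) - (w - ⟪w,e⟫•e) = (z-w) - ⟪z-w,e⟫•e := by
  rw [inner_sub_left]; module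

lemma proj_normsq {e : V} (he : ‖e‖ = 1) (u : V) :
    ‖u - ⟪u,e⟫•e‖^2 = ‖u‖^2 - ⟪u,e⟫^2 := by
  rw [norm_sub_sq_real, real_inner_smul_right, norm_smul, Real.norm_eq_abs, mul_pow,
    sq_abs, he]
  ring

lemma proj_lip {e : V} (he : ‖e‖ = 1) : LipschitzWith 1 (fun z : V => z - ⟪z,e⟫•e) := by
  apply LipschitzWith.of_dist_le_mul
  intro z w
  rw [dist_eq_norm, dist_eq_norm, NNReal.coe_one, one_mul]
  show ‖(z - ⟪z,e⟫•e) - (w - ⟪w,e⟫•e)‖ ≤ ‖z - w‖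
  rw [proj_sub]
  have h1 := proj_normsq he (z - w)
  nlinarith [norm_nonneg (z - w - ⟪z - w, e⟫ • e), norm_nonneg (z - w), sq_nonneg ⟪z - w, e⟫]

lemma proj_anti {e : V} (he : ‖e‖ = 1) {δ : ℝ} (hδpos : 0 < δ) (hδ1 : δ < 1) {u : V}
    (h3 : |⟪u,e⟫| ≤ (1-δ)*‖u‖) : ‖u‖ ≤ δ⁻¹ * ‖u - ⟪u,e⟫•e‖ := by
  have h4 := proj_normsq he u
  have h6 : ⟪u, e⟫^2 ≤ ((1-δ) * ‖u‖)^2 := by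
    rw [← sq_abs ⟪u, e⟫]
    apply pow_le_pow_left₀ (abs_nonneg _) h3
  have h5 : (δ * ‖u‖)^2 ≤ ‖u - ⟪u,e⟫•e‖^2 := by
    rw [h4]
    nlinarith [norm_nonneg u, sq_nonneg ‖u‖]
  have h7 : δ * ‖u‖ ≤ ‖u - ⟪u,e⟫•e‖ := by
    have := Real.sqrt_le_sqrt h5
    rwa [Real.sqrt_sq (by positivity), Real.sqrt_sq (norm_nonneg _)] at this
  rw [← mul_le_mul_iff_right₀ hδpos]
  calc δ * ‖u‖ ≤ ‖u - ⟪u,e⟫•e‖ := h7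
  _ = δ * (δ⁻¹ * ‖u - ⟪u,e⟫•e‖) := by field_simp


end AuxGeom

section AuxMeasure


lemma lipschitz_symm_equiv_piLp (m : ℕ) (hm : 0 < m) :
    LipschitzWith (m : ℝ≥0) (WithLp.equiv 2 (Fin m → ℝ)).symm := by
  have h := PiLp.antilipschitzWith_ofLp 2 (fun _ : Fin m => ℝ)
  have h1 : LipschitzWith ((Fintype.card (Fin m) : ℝ≥0) ^ (1/(2:ℝ≥0∞)).toReal)
      (WithLp.equiv 2 (Fin m → ℝ)).symm := by
    intro u v
    simpa using h ((WithLp.equiv 2 (Fin m → ℝ)).symm u) ((WithLp.equiv 2 (Fin m → ℝ)).symm v)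
  apply h1.weaken
  rw [Fintype.card_fin]
  calc (m : ℝ≥0) ^ (1/(2:ℝ≥0∞)).toReal ≤ (m : ℝ≥0) ^ (1:ℝ) := by
        apply NNReal.rpow_le_rpow_of_exponent_le
        · exact_mod_cast Nat.one_le_iff_ne_zero.2 hm.ne'
        · rw [ENNReal.toReal_div]; norm_num
  _ = (m : ℝ≥0) := NNReal.rpow_one _

lemma muH_pi_eq (m : ℕ) : (μH[(m:ℝ)] : Measure (Fin m → ℝ)) = volume := by
  have := hausdorffMeasure_pi_real (ι := Fin m)
  rwa [Fintype.card_fin] at this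

lemma euclid_ball_upper (m : ℕ) (hm : 0 < m) {t : ℝ} (ht : 0 < t) :
    μH[(m:ℝ)] (ball (0 : EuclideanSpace ℝ (Fin m)) t) ≤ ENNReal.ofReal ((2*t*m)^m) := by
  set φ := WithLp.equiv 2 (Fin m → ℝ) with hφ
  have hd : (0:ℝ) ≤ (m:ℝ) := by positivity
  have himg : ball (0 : EuclideanSpace ℝ (Fin m)) t
      = φ.symm '' (φ '' ball (0 : EuclideanSpace ℝ (Fin m)) t) := by
    rw [Equiv.symm_image_image]
  have hsub : φ '' ball (0 : EuclideanSpace ℝ (Fin m)) t ⊆ ball (0 : Fin m → ℝ) t := by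
    rintro u ⟨w, hw, rfl⟩
    rw [mem_ball]
    calc dist (φ w) (0 : Fin m → ℝ) = dist (φ w) (φ 0) := rfl
    _ ≤ 1 * dist w 0 := (PiLp.lipschitzWith_ofLp 2 (fun _ : Fin m => ℝ)).dist_le_mul w 0
    _ < t := by rw [one_mul]; exact mem_ball.1 hw
  calc μH[(m:ℝ)] (ball (0 : EuclideanSpace ℝ (Fin m)) t)
      = μH[(m:ℝ)] (φ.symm '' (φ '' ball (0 : EuclideanSpace ℝ (Fin m)) t)) := by rw [← himg]
  _ ≤ ((m:ℝ≥0) : ℝ≥0∞) ^ ((m:ℕ):ℝ) * μH[(m:ℝ)] (φ '' ball (0 : EuclideanSpace ℝ (Fin m)) t) :=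
      (lipschitz_symm_equiv_piLp m hm).hausdorffMeasure_image_le hd _
  _ ≤ ((m:ℝ≥0) : ℝ≥0∞) ^ ((m:ℕ):ℝ) * μH[(m:ℝ)] (ball (0 : Fin m → ℝ) t) := by
      exact mul_le_mul_right (measure_mono hsub) _
  _ = ((m:ℝ≥0) : ℝ≥0∞) ^ ((m:ℕ):ℝ) * ENNReal.ofReal ((2*t)^m) := by
      rw [muH_pi_eq m, Real.volume_pi_ball _ ht, Fintype.card_fin]
  _ = ENNReal.ofReal ((2*t*m)^m) := by
      rw [ENNReal.rpow_natCast]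
      rw [show ((m:ℝ≥0) : ℝ≥0∞) = ENNReal.ofReal (m:ℝ) by simp]
      rw [← ENNReal.ofReal_pow (by positivity), ← ENNReal.ofReal_mul (by positivity)]
      congr 1
      rw [← mul_pow]
      ring_nf

lemma euclid_ball_lower (m : ℕ) (hm : 0 < m) {t : ℝ} (ht : 0 < t) :
    ENNReal.ofReal ((2*t/m)^m) ≤ μH[(m:ℝ)] (ball (0 : EuclideanSpace ℝ (Fin m)) t) := by
  set φ := WithLp.equiv 2 (Fin m → ℝ) with hφ
  have hd : (0:ℝ) ≤ (m:ℝ) := by positivity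
  have hm' : (0:ℝ) < m := by exact_mod_cast hm
  have hsub : ball (0 : Fin m → ℝ) (t/m) ⊆ φ '' ball (0 : EuclideanSpace ℝ (Fin m)) t := by
    intro u hu
    refine ⟨φ.symm u, ?_, Equiv.apply_symm_apply _ _⟩
    rw [mem_ball]
    calc dist (φ.symm u) (0 : EuclideanSpace ℝ (Fin m))
        = dist (φ.symm u) (φ.symm 0) := rfl
    _ ≤ (m:ℝ≥0) * dist u 0 := (lipschitz_symm_equiv_piLp m hm).dist_le_mul u 0
    _ < t := by
        have h1 : dist u 0 < t/m := mem_ball.1 hu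
        have : ((m:ℝ≥0):ℝ) = (m:ℝ) := rfl
        rw [this]
        calc (m:ℝ) * dist u 0 < (m:ℝ) * (t/m) := by gcongr
        _ = t := by field_simp
  calc ENNReal.ofReal ((2*t/m)^m)
      = ENNReal.ofReal ((2*(t/m))^m) := by rw [mul_div_assoc]
  _ = μH[(m:ℝ)] (ball (0 : Fin m → ℝ) (t/m)) := by
      rw [muH_pi_eq m, Real.volume_pi_ball _ (by positivity), Fintype.card_fin]
  _ ≤ μH[(m:ℝ)] (φ '' ball (0 : EuclideanSpace ℝ (Fin m)) t) := measure_mono hsub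
  _ ≤ ((1:ℝ≥0) : ℝ≥0∞) ^ ((m:ℕ):ℝ) * μH[(m:ℝ)] (ball (0 : EuclideanSpace ℝ (Fin m)) t) :=
      (PiLp.lipschitzWith_ofLp 2 (fun _ : Fin m => ℝ)).hausdorffMeasure_image_le hd _
  _ = μH[(m:ℝ)] (ball (0 : EuclideanSpace ℝ (Fin m)) t) := by simp


end AuxMeasure

/-- `Ω` is a bounded open set, star-shaped with respect to the ball `B_r(0)`. -/
def StarShaped (n : ℕ) (r : ℝ) (Ω : Set (EuclideanSpace ℝ (Fin n))) : Prop :=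
  IsOpen Ω ∧ Bornology.IsBounded Ω ∧
    ∀ y ∈ ball (0 : EuclideanSpace ℝ (Fin n)) r, ∀ x ∈ Ω, segment ℝ y x ⊆ Ω

/-- `Ω ∈ S_{r,R}`: star-shaped with respect to `B_r(0)` and contained in `B_R(0)`. -/
def SrR (n : ℕ) (r R : ℝ) (Ω : Set (EuclideanSpace ℝ (Fin n))) : Prop :=
  StarShaped n r Ω ∧ Ω ⊆ ball 0 R

/-- Perimeter density estimate: for `n ≥ 2` and `0 < r < R` there are constants
`ε₀ = ε₀(n,r,R) > 0` and `η₂, η₃ > 0` depending only on `n, r, R` such that for every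
`E ∈ S_{r,R}`, every `ε ∈ (0,ε₀]` and every `x ∈ ∂E`,
`η₃ ε^{n-1} ≤ H^{n-1}(∂E ∩ B_ε(x)) ≤ η₂ ε^{n-1}`. -/
theorem statement2 (n : ℕ) (hn : 2 ≤ n) (r R : ℝ) (hr : 0 < r) (hrR : r < R) :
    ∃ ε₀ η₂ η₃ : ℝ, 0 < ε₀ ∧ 0 < η₂ ∧ 0 < η₃ ∧
      ∀ E : Set (EuclideanSpace ℝ (Fin n)), SrR n r R E →
        ∀ ε : ℝ, 0 < ε → ε ≤ ε₀ → ∀ x ∈ frontier E,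
          ENNReal.ofReal (η₃ * ε ^ (n - 1)) ≤ μH[(n:ℝ) - 1] (frontier E ∩ ball x ε) ∧
          μH[(n:ℝ) - 1] (frontier E ∩ ball x ε) ≤ ENNReal.ofReal (η₂ * ε ^ (n - 1)) := by
  have hR : 0 < R := hr.trans hrR
  set V := EuclideanSpace ℝ (Fin n)
  set m : ℕ := n - 1 with hm
  have hm0 : 0 < m := by omega
  have hm' : (0:ℝ) < m := by exact_mod_cast hm0
  have hnm : n = m + 1 := by omega
  set δ : ℝ := r^2/(8*R^2) with hδ
  have hδpos : 0 < δ := by positivity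
  have hδ1 : δ < 1 := by
    rw [hδ, div_lt_one (by positivity)]; nlinarith
  refine ⟨min (r/2) (r^2/(4*R^2) * r/4), (2*m/δ)^m, (r/(2*R*m))^m,
    lt_min (by positivity) (by positivity),
    pow_pos (div_pos (by positivity) hδpos) m,
    pow_pos (div_pos hr (by positivity)) m, ?_⟩
  intro E hSrR ε hε0 hεε₀ x hx
  obtain ⟨⟨hEopen, hEbdd, hstar⟩, hER⟩ := hSrR
  -- E is nonempty, hence contains the ball
  have hEne : E.Nonempty := by
    rcases E.eq_empty_or_nonempty with h | h
    · rw [h] at hx; simp at hx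
    · exact h
  have hball : ball (0:V) r ⊆ E := by
    obtain ⟨x₀, hx₀⟩ := hEne
    intro y hy
    exact hstar y hy x₀ hx₀ (left_mem_segment ℝ y x₀)
  have hfrE : ∀ z ∈ frontier E, z ∉ E := fun z hz hzE =>
    (Set.eq_empty_iff_forall_notMem.1 hEopen.inter_frontier_eq z) ⟨hzE, hz⟩
  have hrx : r ≤ ‖x‖ := by
    by_contra h
    exact hfrE x hx (hball (mem_ball_zero_iff.2 (not_le.1 h)))
  have hxR : ‖x‖ ≤ R := by
    have h1 : x ∈ closure (ball (0:V) R) := closure_mono hER (frontier_subset_closure hx)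
    rw [closure_ball 0 hR.ne'] at h1
    exact mem_closedBall_zero_iff.1 h1
  have hxpos : 0 < ‖x‖ := lt_of_lt_of_le hr hrx
  have hxne : x ≠ 0 := fun h => by rw [h, norm_zero] at hxpos; exact lt_irrefl 0 hxpos
  set e : V := ‖x‖⁻¹ • x with he
  have hee : ⟪e, e⟫ = 1 := by
    rw [he, real_inner_smul_left, real_inner_smul_right, real_inner_self_eq_norm_sq, sq]
    field_simp
  have hxe : ⟪x, e⟫ = ‖x‖ := by
    rw [he, real_inner_smul_right, real_inner_self_eq_norm_sq, sq]
    field_simp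
  set P : V → V := fun z => z - ⟪z, e⟫ • e with hP
  set S : Set V := frontier E ∩ ball x ε with hS
  have hd0 : (0:ℝ) ≤ (n:ℝ) - 1 := by
    have : (1:ℝ) ≤ n := by exact_mod_cast (by omega : 1 ≤ n)
    linarith
  have hcast : (n:ℝ) - 1 = ((m:ℕ):ℝ) := by rw [hnm]; push_cast; ring
  have he1 : ‖e‖ = 1 := by
    rw [he, norm_smul, Real.norm_eq_abs, abs_of_pos (inv_pos.2 hxpos)]
    field_simp
  have hxe : ⟪x, e⟫ = ‖x‖ := by
    rw [he, real_inner_smul_right, real_inner_self_eq_norm_sq, sq]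
    field_simp
  have hPlip : LipschitzWith 1 P := by
    rw [hP]; exact proj_lip he1
  have hPx : P x = 0 := by
    rw [hP]
    simp only [hxe, he]
    match_scalars
    field_simp
    rw [real_inner_smul_right, real_inner_self_eq_norm_sq, pow_two, ← mul_assoc, one_div,
      inv_mul_cancel₀ hxpos.ne']
    ring
  -- anti-Lipschitz inequality on S
  have hPanti : ∀ z₁ ∈ S, ∀ z₂ ∈ S, ‖z₁ - z₂‖ ≤ δ⁻¹ * ‖P z₁ - P z₂‖ := by
    intro z₁ h₁ z₂ h₂
    have h3 : |⟪z₁ - z₂, e⟫| ≤ (1 - δ) * ‖z₁ - z₂‖ := by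
      rw [he]
      exact coneL3 hr hrR hEopen hball hER hstar hx h₂.1 h₁.1 h₂.2 h₁.2 hεε₀
    have := proj_anti he1 hδpos hδ1 h3
    calc ‖z₁ - z₂‖ ≤ δ⁻¹ * ‖(z₁ - z₂) - ⟪z₁ - z₂, e⟫•e‖ := this
    _ = δ⁻¹ * ‖P z₁ - P z₂‖ := by rw [hP]; rw [proj_sub e z₁ z₂]
  -- the projections stay in a small ball
  have hPS_ball : ∀ z ∈ S, ‖P z‖ < ε := by
    intro z hz
    have h1 : ‖P z - P x‖ ≤ ‖z - x‖ := by
      have := hPlip.dist_le_mul z x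
      rwa [dist_eq_norm, dist_eq_norm, NNReal.coe_one, one_mul] at this
    rw [hPx, sub_zero] at h1
    calc ‖P z‖ ≤ ‖z - x‖ := h1
    _ < ε := by rw [← dist_eq_norm]; exact hz.2
  -- P z is orthogonal to x
  have hPorth : ∀ z : V, ⟪x, P z⟫ = 0 := by
    intro z
    rw [hP]
    simp only [inner_sub_right, real_inner_smul_right, hxe]
    have h2 : ⟪z, e⟫ = ‖x‖⁻¹ * ⟪z, x⟫ := by rw [he, real_inner_smul_right]
    have h3 : ⟪x, z⟫ = ⟪z, x⟫ := real_inner_comm _ _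
    rw [h2, h3]
    field_simp
    ring
  -- the submodule and isometry setup
  haveI : Fact (Module.finrank ℝ V = m + 1) := ⟨by
    rw [finrank_euclideanSpace_fin]; omega⟩
  set K := (ℝ ∙ x)ᗮ with hK
  set B := OrthonormalBasis.fromOrthogonalSpanSingleton (𝕜 := ℝ) m hxne with hB
  set ι : EuclideanSpace ℝ (Fin m) → V := fun u => ((B.repr.symm u : K) : V) with hι
  have hιiso : Isometry ι := by
    have h1 : Isometry ((↑) : K → V) := isometry_subtype_coe
    exact h1.comp B.repr.symm.isometry
  have hι0 : ι 0 = 0 := by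
    rw [hι]; simp
  have hιnorm : ∀ u, ‖ι u‖ = ‖u‖ := by
    intro u
    have := hιiso.dist_eq u 0
    rwa [hι0, dist_zero_right, dist_zero_right] at this
  have hιmem : ∀ u, ι u ∈ K := fun u => SetLike.coe_mem _
  have hιrange : Set.range ι = (K : Set V) := by
    rw [hι]
    have h1 : Set.range (fun u : EuclideanSpace ℝ (Fin m) => ((B.repr.symm u : K) : V))
        = (↑) '' Set.range (fun u : EuclideanSpace ℝ (Fin m) => (B.repr.symm u : K)) := by
      rw [← Set.range_comp]; rfl
    rw [h1]
    have h2 : Set.range (fun u : EuclideanSpace ℝ (Fin m) => (B.repr.symm u : K)) = univ :=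
      B.repr.symm.surjective.range_eq
    rw [h2, Set.image_univ, Subtype.range_coe]
  have hPS_range : P '' S ⊆ Set.range ι := by
    rintro u ⟨z, hz, rfl⟩
    rw [hιrange, hK]
    exact Submodule.mem_orthogonal_singleton_iff_inner_right.2 (hPorth z)
  have himg2 : ι '' (ι ⁻¹' (P '' S)) = P '' S := Set.image_preimage_eq_of_subset hPS_range
  set A := ι ⁻¹' (P '' S) with hA
  have hA_ball : A ⊆ ball (0 : EuclideanSpace ℝ (Fin m)) ε := by
    intro u hu
    rw [mem_ball_zero_iff]
    obtain ⟨z, hz, hPz⟩ := hu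
    rw [← hιnorm u, ← hPz]
    exact hPS_ball z hz
  -- inverse function
  set g := Function.invFunOn P S with hg
  have hginv : ∀ z ∈ S, g (P z) = z := by
    intro z hz
    have h1 : g (P z) ∈ S := Function.invFunOn_mem ⟨z, hz, rfl⟩
    have h2 : P (g (P z)) = P z := Function.invFunOn_eq ⟨z, hz, rfl⟩
    have h3 := hPanti _ h1 z hz
    rw [h2, sub_self, norm_zero, mul_zero] at h3
    have h4 : g (P z) - z = 0 := by
      have := norm_nonneg (g (P z) - z)
      have h5 : ‖g (P z) - z‖ = 0 := le_antisymm h3 this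
      exact norm_eq_zero.1 h5
    rw [← sub_eq_zero]; exact h4
  have hgimg : g '' (P '' S) = S := by
    apply Set.Subset.antisymm
    · rintro u ⟨v, ⟨z, hz, rfl⟩, rfl⟩
      rw [hginv z hz]; exact hz
    · intro z hz
      exact ⟨P z, ⟨z, hz, rfl⟩, hginv z hz⟩
  have hglip : LipschitzOnWith (δ⁻¹).toNNReal g (P '' S) := by
    apply LipschitzOnWith.of_dist_le_mul
    rintro u ⟨z₁, hz₁, rfl⟩ v ⟨z₂, hz₂, rfl⟩
    rw [hginv _ hz₁, hginv _ hz₂, dist_eq_norm, dist_eq_norm,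
      Real.coe_toNNReal _ (inv_nonneg.2 hδpos.le)]
    exact hPanti z₁ hz₁ z₂ hz₂
  have hd0m : (0:ℝ) ≤ (m:ℝ) := by positivity
  -- upper bound
  have hupper : μH[(m:ℝ)] S ≤ ENNReal.ofReal ((2*m/δ)^m * ε^m) := by
    calc μH[(m:ℝ)] S = μH[(m:ℝ)] (g '' (P '' S)) := by rw [hgimg]
    _ ≤ ((δ⁻¹).toNNReal : ℝ≥0∞) ^ ((m:ℝ)) * μH[(m:ℝ)] (P '' S) :=
        hglip.hausdorffMeasure_image_le hd0m
    _ = ((δ⁻¹).toNNReal : ℝ≥0∞) ^ ((m:ℝ)) * μH[(m:ℝ)] (ι '' A) := by rw [himg2]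
    _ = ((δ⁻¹).toNNReal : ℝ≥0∞) ^ ((m:ℝ)) * μH[(m:ℝ)] A := by
        rw [hιiso.hausdorffMeasure_image (Or.inl hd0m)]
    _ ≤ ((δ⁻¹).toNNReal : ℝ≥0∞) ^ ((m:ℝ)) * μH[(m:ℝ)] (ball (0:EuclideanSpace ℝ (Fin m)) ε) :=
        mul_le_mul_right (measure_mono hA_ball) _
    _ ≤ ((δ⁻¹).toNNReal : ℝ≥0∞) ^ ((m:ℝ)) * ENNReal.ofReal ((2*ε*m)^m) :=
        mul_le_mul_right (euclid_ball_upper m hm0 hε0) _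
    _ = ENNReal.ofReal ((2*m/δ)^m * ε^m) := by
        rw [ENNReal.rpow_natCast]
        rw [show (((δ⁻¹).toNNReal : ℝ≥0∞)) = ENNReal.ofReal δ⁻¹ from rfl]
        rw [← ENNReal.ofReal_pow (by positivity), ← ENNReal.ofReal_mul (by positivity)]
        congr 1
        rw [← mul_pow, ← mul_pow]
        congr 1
        field_simp
  -- lower bound
  have hεr : ε ≤ r := by
    have := le_trans hεε₀ (min_le_left _ _)
    linarith
  have hdisk : ι '' (ball (0:EuclideanSpace ℝ (Fin m)) (r/(4*R)*ε)) ⊆ P '' S := by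
    rintro v ⟨u, hu, rfl⟩
    have hvK : ι u ∈ K := hιmem u
    have hv : ⟪ι u, x⟫ = 0 := by
      rw [hK] at hvK
      exact Submodule.mem_orthogonal_singleton_iff_inner_left.1 hvK
    have hvn : ‖ι u‖ < r/(4*R)*ε := by rw [hιnorm]; exact mem_ball_zero_iff.1 hu
    obtain ⟨z, hzS, hPz⟩ := coneL5 hr hrR hEopen hball hER hstar hx hε0 hεr hv hvn
    rw [← he] at hPz
    exact ⟨z, hzS, hPz⟩
  have hlower : ENNReal.ofReal ((r/(2*R*m))^m * ε^m) ≤ μH[(m:ℝ)] S := by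
    have hrw : (r/(2*R*m))^m * ε^m = (2*(r/(4*R)*ε)/m)^m := by
      rw [← mul_pow]
      congr 1
      field_simp
      ring
    calc ENNReal.ofReal ((r/(2*R*m))^m * ε^m)
        = ENNReal.ofReal ((2*(r/(4*R)*ε)/m)^m) := by rw [hrw]
    _ ≤ μH[(m:ℝ)] (ball (0:EuclideanSpace ℝ (Fin m)) (r/(4*R)*ε)) :=
        euclid_ball_lower m hm0 (by positivity)
    _ = μH[(m:ℝ)] (ι '' ball (0:EuclideanSpace ℝ (Fin m)) (r/(4*R)*ε)) :=
        (hιiso.hausdorffMeasure_image (Or.inl hd0m) _).symm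
    _ ≤ μH[(m:ℝ)] (P '' S) := measure_mono hdisk
    _ ≤ ((1:ℝ≥0) : ℝ≥0∞) ^ ((m:ℝ)) * μH[(m:ℝ)] S := hPlip.hausdorffMeasure_image_le hd0m S
    _ = μH[(m:ℝ)] S := by simp
  rw [hcast]
  exact ⟨hlower, hupper⟩
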